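/- Let R be a commutative ring of prime characteristic p > 0, let 𝔟₁, …, 𝔟ₘ ⊆ R be ideals with 𝔟ᵢ generated by at most lᵢ elements, and let n₁, …, nₘ ≥ 0 be integers with Σᵢ nᵢ = n. Set sᵢ := max{ 0, ⌈nᵢ/p^e⌉ − lᵢ } and l := Σᵢ lᵢ. If each 𝔟ᵢ satisfies 𝔟ᵢ^{nᵢ} = (𝔟ᵢ^{sᵢ})^[p^e] · 𝔟ᵢ^{nᵢ − p^e sᵢ} and n > p^e(l − 1), then ∏ᵢ 𝔟ᵢ^{nᵢ} ⊆ ((𝔟₁ + ⋯ + 𝔟ₘ)^{⌈n/p^e⌉ − l})^[p^e] · (𝔟₁ + ⋯ + 𝔟ₘ)^{n − p^e(⌈n/p^e⌉ − l)}. -/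

import Mathlib

/-- The Frobenius power `I^[q]` of an ideal. -/
def frobPow {R : Type*} [CommSemiring R] (I : Ideal R) (q : ℕ) : Ideal R :=
  Ideal.span ((fun f => f ^ q) '' (I : Set R))

section Aux
variable {R : Type*} [CommRing R]

lemma frobPow_eq_map (p : ℕ) [Fact p.Prime] [CharP R p] (e : ℕ) (I : Ideal R) :
    frobPow I (p ^ e) = I.map (iterateFrobenius R p e) := rfl

lemma ideal_map_finset_prod {ι : Type*} (F : R →+* R) (t : Finset ι) (g : ι → Ideal R) :
    Ideal.map F (∏ i ∈ t, g i) = ∏ i ∈ t, Ideal.map F (g i) := by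
  classical
  induction t using Finset.induction with
  | empty => simp [Ideal.one_eq_top, Ideal.map_top]
  | insert _ _ h ih => rw [Finset.prod_insert h, Finset.prod_insert h, Ideal.map_mul, ih]

lemma ideal_map_le_pow (p : ℕ) [Fact p.Prime] [CharP R p] (e : ℕ) (J : Ideal R) :
    Ideal.map (iterateFrobenius R p e) J ≤ J ^ (p ^ e) := by
  rw [Ideal.map_le_iff_le_comap]
  intro x hx
  simp only [Ideal.mem_comap, iterateFrobenius_def]
  exact Ideal.pow_mem_pow hx _

lemma prod_pow_le_pow_sum {m : ℕ} (𝔟 : Fin m → Ideal R) (B : Ideal R)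
    (hB : ∀ i, 𝔟 i ≤ B) (a : Fin m → ℕ) (t : Finset (Fin m)) :
    ∏ i ∈ t, 𝔟 i ^ a i ≤ B ^ (∑ i ∈ t, a i) := by
  classical
  induction t using Finset.induction with
  | empty => simp [Ideal.one_eq_top]
  | insert _ _ h ih =>
    rw [Finset.prod_insert h, Finset.sum_insert h, pow_add]
    exact Ideal.mul_mono (Ideal.pow_right_mono (hB _) _) ih

end Aux

theorem prod_pow_subset_frobPow {R : Type*} [CommRing R] (p : ℕ) (hp : p.Prime) [CharP R p]
    (e m : ℕ) (𝔟 : Fin m → Ideal R) (li : Fin m → ℕ)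
    (hgen : ∀ i, ∃ G : Finset R, G.card ≤ li i ∧ Ideal.span (G : Set R) = 𝔟 i)
    (ni : Fin m → ℕ) (n : ℕ) (hn : n = ∑ i, ni i)
    (c : Fin m → ℕ) (hc : ∀ i, (c i : ℤ) = ⌈(ni i : ℚ) / ((p : ℚ) ^ e)⌉)
    (s : Fin m → ℕ) (hs : ∀ i, s i = max 0 (c i - li i))
    (l : ℕ) (hl : l = ∑ i, li i)
    (C : ℕ) (hC : (C : ℤ) = ⌈(n : ℚ) / ((p : ℚ) ^ e)⌉)
    (hfact : ∀ i, 𝔟 i ^ ni i = frobPow (𝔟 i ^ s i) (p ^ e) * 𝔟 i ^ (ni i - p ^ e * s i))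
    (hbig : (p : ℤ) ^ e * ((l : ℤ) - 1) < (n : ℤ)) :
    ∏ i, 𝔟 i ^ ni i ≤
      frobPow ((∑ i, 𝔟 i) ^ (C - l)) (p ^ e) * (∑ i, 𝔟 i) ^ (n - p ^ e * (C - l)) := by
  classical
  haveI := Fact.mk hp
  have hp0 : (0 : ℚ) < (p : ℚ) := by exact_mod_cast hp.pos
  have hqQ : (0 : ℚ) < (p : ℚ) ^ e := by positivity
  have hs' : ∀ i, s i = c i - li i := fun i => by rw [hs i]; omega
  by_cases hgood : ∀ i, p ^ e * s i ≤ ni i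
  · -- main case
    -- numeric facts
    have hcn : ∀ i, ni i ≤ p ^ e * c i := by
      intro i
      have h1 : ((ni i : ℚ) / ((p : ℚ) ^ e)) ≤ ((c i : ℤ) : ℚ) := by
        rw [hc i]; exact Int.le_ceil _
      rw [div_le_iff₀ hqQ] at h1
      have h2 : (ni i : ℚ) ≤ ((p ^ e * c i : ℕ) : ℚ) := by push_cast; push_cast at h1; linarith
      exact_mod_cast h2
    have hCsum : C ≤ ∑ i, c i := by
      have hn' : n ≤ p ^ e * ∑ i, c i := by
        rw [hn, Finset.mul_sum]; exact Finset.sum_le_sum fun i _ => hcn i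
      have h2 : ((n : ℚ) / ((p : ℚ) ^ e)) ≤ ((∑ i, c i : ℕ) : ℚ) := by
        rw [div_le_iff₀ hqQ]
        have := (Nat.cast_le (α := ℚ)).2 hn'
        push_cast at this ⊢
        linarith
      have h3 : (C : ℤ) ≤ ((∑ i, c i : ℕ) : ℤ) := by
        rw [hC, Int.ceil_le]; exact_mod_cast h2
      exact_mod_cast h3
    have hSl : C ≤ (∑ i, s i) + l := by
      have h1 : ∀ i, c i ≤ s i + li i := fun i => by rw [hs' i]; omega
      calc C ≤ ∑ i, c i := hCsum
        _ ≤ ∑ i, (s i + li i) := Finset.sum_le_sum fun i _ => h1 i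
        _ = (∑ i, s i) + l := by rw [Finset.sum_add_distrib, hl]
    have hDS : C - l ≤ ∑ i, s i := by omega
    have hqST : p ^ e * (∑ i, s i) + (∑ i, (ni i - p ^ e * s i)) = n := by
      rw [hn, Finset.mul_sum, ← Finset.sum_add_distrib]
      exact Finset.sum_congr rfl fun i _ => by have := hgood i; omega
    -- ideal facts
    have hBle : ∀ i, 𝔟 i ≤ ∑ j, 𝔟 j := fun i =>
      Finset.single_le_sum (f := 𝔟) (fun j _ => bot_le) (Finset.mem_univ i)
    set B := ∑ i, 𝔟 i with hB
    set F := iterateFrobenius R p e with hF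
    have hexp : ((∑ i, s i) - (C - l)) * p ^ e + (∑ i, (ni i - p ^ e * s i))
        = n - p ^ e * (C - l) := by
      have h2 : ((∑ i, s i) - (C - l)) * p ^ e
          = p ^ e * (∑ i, s i) - p ^ e * (C - l) := by
        rw [Nat.sub_mul, mul_comm (∑ i, s i) (p ^ e), mul_comm (C - l) (p ^ e)]
      have h3 : p ^ e * (C - l) ≤ p ^ e * (∑ i, s i) := Nat.mul_le_mul_left _ hDS
      omega
    calc ∏ i, 𝔟 i ^ ni i
        = Ideal.map F (∏ i, 𝔟 i ^ s i) * ∏ i, 𝔟 i ^ (ni i - p ^ e * s i) := by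
          rw [ideal_map_finset_prod, ← Finset.prod_mul_distrib]
          exact Finset.prod_congr rfl fun i _ => by
            rw [hfact i, frobPow_eq_map]
      _ ≤ Ideal.map F (B ^ (∑ i, s i)) * B ^ (∑ i, (ni i - p ^ e * s i)) :=
          Ideal.mul_mono (Ideal.map_mono (prod_pow_le_pow_sum 𝔟 B hBle s _))
            (prod_pow_le_pow_sum 𝔟 B hBle _ _)
      _ = Ideal.map F (B ^ (C - l)) * Ideal.map F (B ^ ((∑ i, s i) - (C - l)))
            * B ^ (∑ i, (ni i - p ^ e * s i)) := by
          rw [← Ideal.map_mul, ← pow_add, Nat.add_sub_cancel' hDS]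
      _ ≤ Ideal.map F (B ^ (C - l)) * (B ^ ((∑ i, s i) - (C - l))) ^ (p ^ e)
            * B ^ (∑ i, (ni i - p ^ e * s i)) :=
          Ideal.mul_mono (Ideal.mul_mono le_rfl (ideal_map_le_pow p e _)) le_rfl
      _ = Ideal.map F (B ^ (C - l)) * B ^ (n - p ^ e * (C - l)) := by
          rw [← pow_mul, mul_assoc, ← pow_add, hexp]
      _ = frobPow (B ^ (C - l)) (p ^ e) * B ^ (n - p ^ e * (C - l)) := by
          rw [frobPow_eq_map]
  · -- degenerate case: some 𝔟 i is zero and ni i > 0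
    push_neg at hgood
    obtain ⟨i, hi⟩ := hgood
    have hni0 : ni i ≠ 0 := by
      intro h
      have hci : c i = 0 := by
        have := hc i; rw [h] at this; simp at this; exact_mod_cast this
      have hsz : s i = 0 := by rw [hs' i, hci]; omega
      rw [hsz, mul_zero] at hi
      omega
    have hli0 : li i = 0 := by
      by_contra hli
      have hsi_pos : 0 < s i := by
        by_contra h
        push_neg at h
        have hsz : s i = 0 := Nat.le_zero.mp h
        rw [hsz, mul_zero] at hi
        omega
      have hci1 : 1 ≤ c i := by rw [hs' i] at hsi_pos; omega
      have h1 : ((c i : ℤ) : ℚ) < (ni i : ℚ) / ((p : ℚ) ^ e) + 1 := by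
        rw [hc i]; exact Int.ceil_lt_add_one _
      have h2 : ((c i : ℚ) - 1) * (p : ℚ) ^ e < (ni i : ℚ) := by
        rw [← lt_div_iff₀ hqQ]; push_cast at h1 ⊢; linarith
      have h3 : (((c i - 1) * p ^ e : ℕ) : ℚ) < (ni i : ℚ) := by
        push_cast [Nat.cast_sub hci1]; push_cast at h2; linarith
      have h4 : (c i - 1) * p ^ e < ni i := by exact_mod_cast h3
      have h5 : s i ≤ c i - 1 := by rw [hs' i]; omega
      have h6 : p ^ e * s i ≤ (c i - 1) * p ^ e := by
        rw [mul_comm]; exact Nat.mul_le_mul_right _ h5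
      omega
    obtain ⟨G, hGc, hGs⟩ := hgen i
    have hGe : G = ∅ := Finset.card_eq_zero.mp (Nat.le_antisymm (hli0 ▸ hGc) (Nat.zero_le _))
    have hbot : 𝔟 i = ⊥ := by rw [← hGs, hGe]; simp
    have hle : ∏ j, 𝔟 j ^ ni j ≤ 𝔟 i ^ ni i := by
      refine le_trans Ideal.prod_le_inf ?_
      exact Finset.inf_le (Finset.mem_univ i)
    have hzero : 𝔟 i ^ ni i = ⊥ := by
      rw [hbot, ← Ideal.zero_eq_bot, zero_pow hni0]
    exact le_trans (hzero ▸ hle) bot_le
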